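/- Fix n, J, N, K ∈ ℕ with n ≥ 1, J ≥ 1, 1 ≤ K ≤ N, K·J even and K·J ≥ 2, and fix ε > 0 and σ > 0. Let F be the set of vectors β : Fin J × Fin N → ℝ such that there exist L ⊆ Fin N with |L| = K and disjoint sets A, B partitioning S = (Fin J) × L with |A| = |B| = KJ/2, β_{ij} = −ε for (i,j) ∈ A, β_{ij} = √(2/(KJ)) + ε for (i,j) ∈ B, and β_{ij} = 0 for (i,j) ∉ S. Assume 2n·log 2 + log 2 ≤ (1/2)·log(C(N,K) · C(KJ, KJ/2)). Then for every measurable estimator β̂ : ℝ^{n×(JN)} × ℝ^n → ℝ^{JN} (vectors indexed by Fin J × Fin N), under the joint law in which β* is uniform on F, X has i.i.d. entries gaussianReal 0 (1/n), e ∈ ℝ^n has i.i.d. entries gaussianReal 0 σ², and β*, X, e are mutually independent, the probability that β̂(X, sign(X·β* + e)) ≠ β* is at least 1/2. -/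

import Mathlib

open MeasureTheory ProbabilityTheory Real
open scoped ENNReal NNReal

noncomputable def signFun (x : ℝ) : ℝ := if 0 ≤ x then 1 else -1

noncomputable def F3block (J N K : ℕ) (ε : ℝ) : Set (Fin J × Fin N → ℝ) :=
  {β | ∃ L : Finset (Fin N), L.card = K ∧
    ∃ A B : Finset (Fin J × Fin N), Disjoint A B ∧
      A ∪ B = Finset.univ ×ˢ L ∧
      A.card = K * J / 2 ∧ B.card = K * J / 2 ∧
      (∀ p ∈ A, β p = -ε) ∧ (∀ p ∈ B, β p = Real.sqrt (2 / (K * J : ℝ)) + ε) ∧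
      ∀ p ∉ A ∪ B, β p = 0}

/-- Index set for the block ensemble: a column set `L` together with a half-size subset. -/
def blockIndex (J N K : ℕ) : Finset ((Σ _ : Finset (Fin N), Finset (Fin J × Fin N))) :=
  (Finset.univ.powersetCard K).sigma fun L => (Finset.univ ×ˢ L).powersetCard (K * J / 2)

noncomputable def blockVec (J N K : ℕ) (ε : ℝ)
    (LA : Σ _ : Finset (Fin N), Finset (Fin J × Fin N)) : Fin J × Fin N → ℝ :=
  fun p => if p ∈ LA.2 then -ε else
    if p.2 ∈ LA.1 then Real.sqrt (2 / (K * J : ℝ)) + ε else 0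

lemma blockIndex_card (J N K : ℕ) :
    (blockIndex J N K).card = N.choose K * (K * J).choose (K * J / 2) := by
  classical
  rw [blockIndex, Finset.card_sigma]
  rw [Finset.sum_congr rfl (fun L hL => ?_), Finset.sum_const,
    Finset.card_powersetCard, Finset.card_univ, Fintype.card_fin, smul_eq_mul]
  · rw [Finset.card_powersetCard, Finset.card_product, Finset.card_univ, Fintype.card_fin]
    rw [Finset.mem_powersetCard] at hL
    rw [hL.2, mul_comm J K]

lemma blockVec_injOn (J N K : ℕ) (hJ : 1 ≤ J) (ε : ℝ) (hε : 0 < ε) :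
    Set.InjOn (blockVec J N K ε) ↑(blockIndex J N K) := by
  classical
  have hv : 0 < Real.sqrt (2 / (K * J : ℝ)) + ε :=
    add_pos_of_nonneg_of_pos (Real.sqrt_nonneg _) hε
  rintro ⟨L, A⟩ hLA ⟨L', A'⟩ hLA' h
  rw [blockIndex, Finset.mem_coe, Finset.mem_sigma, Finset.mem_powersetCard,
    Finset.mem_powersetCard] at hLA hLA'
  have key : ∀ (L₁ L₂ : Finset (Fin N)) (A₁ A₂ : Finset (Fin J × Fin N)),
      A₁ ⊆ Finset.univ ×ˢ L₁ → A₂ ⊆ Finset.univ ×ˢ L₂ →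
      blockVec J N K ε ⟨L₁, A₁⟩ = blockVec J N K ε ⟨L₂, A₂⟩ →
      L₁ ⊆ L₂ ∧ A₁ ⊆ A₂ := by
    intro L₁ L₂ A₁ A₂ hA₁ hA₂ hEq
    constructor
    · intro j hj
      have i : Fin J := ⟨0, by omega⟩
      by_contra hj'
      have h2 : (i, j) ∉ A₂ := fun hmem => hj' (Finset.mem_product.mp (hA₂ hmem)).2
      have := congrFun hEq (i, j)
      simp only [blockVec] at this
      rw [if_neg h2, if_neg hj'] at this
      split_ifs at this <;> first | linarith | exact absurd hj (by assumption)
    · intro p hp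
      have := congrFun hEq p
      simp only [blockVec, if_pos hp] at this
      by_contra hp2
      rw [if_neg hp2] at this
      split_ifs at this <;> linarith
  obtain ⟨hL1, hA1⟩ := key L L' A A' hLA.2.1 hLA'.2.1 h
  obtain ⟨hL2, hA2⟩ := key L' L A' A hLA'.2.1 hLA.2.1 h.symm
  obtain rfl : L = L' := le_antisymm hL1 hL2
  obtain rfl : A = A' := le_antisymm hA1 hA2
  rfl

lemma F3block_eq (J N K : ℕ) (hJ : 1 ≤ J) (heven : Even (K * J)) (ε : ℝ) (hε : 0 < ε) :
    F3block J N K ε = blockVec J N K ε '' ↑(blockIndex J N K) := by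
  classical
  have hv : 0 < Real.sqrt (2 / (K * J : ℝ)) + ε :=
    add_pos_of_nonneg_of_pos (Real.sqrt_nonneg _) hε
  obtain ⟨r, hr⟩ := heven
  ext β
  constructor
  · rintro ⟨L, hL, A, B, hdisj, hunion, hA, hB, hvalA, hvalB, hval0⟩
    refine ⟨⟨L, A⟩, ?_, ?_⟩
    · rw [Finset.mem_coe, blockIndex, Finset.mem_sigma, Finset.mem_powersetCard,
        Finset.mem_powersetCard]
      exact ⟨⟨Finset.subset_univ _, hL⟩, hunion ▸ Finset.subset_union_left, hA⟩
    · funext p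
      simp only [blockVec]
      by_cases hpA : p ∈ A
      · rw [if_pos hpA]; exact (hvalA p hpA).symm
      rw [if_neg hpA]
      by_cases hpL : p.2 ∈ L
      · have hpS : p ∈ A ∪ B := by
          rw [hunion, Finset.mem_product]; exact ⟨Finset.mem_univ _, hpL⟩
        have hpB : p ∈ B := (Finset.mem_union.mp hpS).resolve_left hpA
        rw [if_pos hpL]; exact (hvalB p hpB).symm
      · rw [if_neg hpL]
        refine (hval0 p ?_).symm
        rw [hunion, Finset.mem_product]
        exact fun h => hpL h.2
  · rintro ⟨⟨L, A⟩, hmem, rfl⟩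
    rw [Finset.mem_coe, blockIndex, Finset.mem_sigma, Finset.mem_powersetCard,
      Finset.mem_powersetCard] at hmem
    obtain ⟨⟨-, hL⟩, hAsub, hA⟩ := hmem
    refine ⟨L, hL, A, (Finset.univ ×ˢ L) \ A, Finset.disjoint_sdiff,
      Finset.union_sdiff_of_subset hAsub, hA, ?_, ?_, ?_, ?_⟩
    · rw [Finset.card_sdiff_of_subset hAsub, Finset.card_product, Finset.card_univ,
        Fintype.card_fin, hL, hA]
      have hcomm : J * K = K * J := Nat.mul_comm J K
      omega
    · intro p hp; simp only [blockVec, if_pos hp]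
    · intro p hp
      obtain ⟨hpS, hpA⟩ := Finset.mem_sdiff.mp hp
      simp only [blockVec, if_neg hpA, if_pos (Finset.mem_product.mp hpS).2]
    · intro p hp
      rw [Finset.union_sdiff_of_subset hAsub, Finset.mem_product] at hp
      have hpA : p ∉ A := fun h => hp ⟨Finset.mem_univ _, (Finset.mem_product.mp (hAsub h)).2⟩
      have hpL : p.2 ∉ L := fun h => hp ⟨Finset.mem_univ _, h⟩
      simp only [blockVec, if_neg hpA, if_neg hpL]

lemma signFun_measurable : Measurable signFun := by
  unfold signFun
  exact Measurable.ite (measurableSet_le measurable_const measurable_id) measurable_const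
    measurable_const

theorem onebit_cs_block_sparsity_lower_bound
    (n J N K : ℕ) (hn : 1 ≤ n) (hJ : 1 ≤ J) (hK1 : 1 ≤ K) (hKN : K ≤ N)
    (heven : Even (K * J)) (hKJ2 : 2 ≤ K * J)
    (ε σ : ℝ) (hε : 0 < ε) (hσ : 0 < σ)
    (hbound : 2 * (n : ℝ) * Real.log 2 + Real.log 2 ≤
      (1 / 2) * Real.log ((N.choose K : ℝ) * ((K * J).choose (K * J / 2) : ℝ)))
    (est : (Fin n → Fin J × Fin N → ℝ) × (Fin n → ℝ) → (Fin J × Fin N → ℝ))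
    (hest : Measurable est) :
    (1 / 2 : ℝ≥0∞) ≤
      ((uniformOn (F3block J N K ε)).prod
          ((Measure.pi fun _ : Fin n => Measure.pi fun _ : Fin J × Fin N =>
              gaussianReal 0 (1 / (n : ℝ≥0))).prod
            (Measure.pi fun _ : Fin n => gaussianReal 0 ⟨σ ^ 2, sq_nonneg σ⟩)))
        {ω : (Fin J × Fin N → ℝ) × ((Fin n → Fin J × Fin N → ℝ) × (Fin n → ℝ)) |
          est (ω.2.1, fun i => signFun ((∑ p, ω.2.1 i p * ω.1 p) + ω.2.2 i)) ≠ ω.1} := by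
  classical
  set μβ := uniformOn (F3block J N K ε) with hμβ
  set μX := (Measure.pi fun _ : Fin n => Measure.pi fun _ : Fin J × Fin N =>
      gaussianReal 0 (1 / (n : ℝ≥0))) with hμX
  set μe := (Measure.pi fun _ : Fin n => gaussianReal 0 ⟨σ ^ 2, sq_nonneg σ⟩) with hμe
  set ν := μX.prod μe with hν
  -- the number of candidate signals
  set c : ℕ := N.choose K * (K * J).choose (K * J / 2) with hc
  -- counting facts about F
  have hFeq : F3block J N K ε =
      ↑((blockIndex J N K).image (blockVec J N K ε)) := by
    rw [F3block_eq J N K hJ heven ε hε, Finset.coe_image]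
  have hcard : ((blockIndex J N K).image (blockVec J N K ε)).card = c := by
    rw [Finset.card_image_of_injOn (blockVec_injOn J N K hJ ε hε), blockIndex_card]
  -- numeric bound : 2 ^ (n+1) ≤ c
  have hc1 : 1 ≤ c := Nat.one_le_iff_ne_zero.mpr <| by
    have := Nat.choose_pos hKN
    have := Nat.choose_pos (Nat.div_le_self (K * J) 2)
    positivity
  have hnum : (2 : ℕ) ^ (n + 1) ≤ c := by
    have hcR : (0 : ℝ) < (c : ℝ) := by exact_mod_cast hc1
    have hlog : Real.log ((2 : ℝ) ^ (4 * n + 2)) ≤ Real.log c := by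
      rw [Real.log_pow]
      have : ((N.choose K : ℝ) * ((K * J).choose (K * J / 2) : ℝ)) = (c : ℝ) := by
        push_cast [hc]; ring
      rw [this] at hbound
      push_cast
      nlinarith [Real.log_pos (by norm_num : (1:ℝ) < 2)]
    have h2c : (2 : ℝ) ^ (4 * n + 2) ≤ (c : ℝ) :=
      (Real.log_le_log_iff (by positivity) hcR).mp hlog
    have h2n : (2 : ℝ) ^ (n + 1) ≤ (2 : ℝ) ^ (4 * n + 2) := by
      apply pow_le_pow_right₀ (by norm_num); omega
    exact_mod_cast h2n.trans h2c
  -- F is finite and nonempty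
  have hFfin : (F3block J N K ε).Finite := hFeq ▸ Finset.finite_toSet _
  have hFne : (F3block J N K ε).Nonempty := by
    rw [hFeq]
    apply Finset.coe_nonempty.mpr
    rw [← Finset.card_pos, hcard]; omega
  haveI : IsProbabilityMeasure μβ := uniformOn_isProbabilityMeasure hFfin hFne
  haveI : IsProbabilityMeasure ν := by
    haveI : IsProbabilityMeasure (gaussianReal 0 ⟨σ ^ 2, sq_nonneg σ⟩) :=
      instIsProbabilityMeasureGaussianReal 0 _
    rw [hν, hμX, hμe]; infer_instance
  -- the "correct estimation" event
  have hf : Measurable (fun ω : (Fin J × Fin N → ℝ) ×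
      ((Fin n → Fin J × Fin N → ℝ) × (Fin n → ℝ)) =>
      (ω.2.1, fun i => signFun ((∑ p, ω.2.1 i p * ω.1 p) + ω.2.2 i))) := by
    apply Measurable.prod
    · exact measurable_snd.fst
    · apply measurable_pi_lambda
      intro i
      apply signFun_measurable.comp
      apply Measurable.add
      · apply Finset.measurable_sum
        intro p _
        exact ((measurable_pi_apply p).comp ((measurable_pi_apply i).comp
          (measurable_fst.comp measurable_snd))).mul
          ((measurable_pi_apply p).comp measurable_fst)
      · exact (measurable_pi_apply i).comp (measurable_snd.comp measurable_snd)
  set C : Set ((Fin J × Fin N → ℝ) × ((Fin n → Fin J × Fin N → ℝ) × (Fin n → ℝ))) :=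
    {ω | est (ω.2.1, fun i => signFun ((∑ p, ω.2.1 i p * ω.1 p) + ω.2.2 i)) = ω.1} with hCdef
  have hC : MeasurableSet C :=
    _root_.measurableSet_eq_fun (hest.comp hf) measurable_fst
  -- pointwise bound: for fixed (X, e), the correct-set has μβ-measure at most 1/2
  have hpoint : ∀ x : (Fin n → Fin J × Fin N → ℝ) × (Fin n → ℝ),
      μβ {β | (β, x) ∈ C} ≤ 1 / 2 := by
    intro x
    set g2 : (Fin n → Bool) → (Fin J × Fin N → ℝ) :=
      fun b => est (x.1, fun i => if b i then (1 : ℝ) else -1) with hg2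
    have hsub : {β | (β, x) ∈ C} ⊆ Set.range g2 := by
      intro β hβ
      have heqfun : (fun i => if decide (0 ≤ (∑ p, x.1 i p * β p) + x.2 i) = true
          then (1 : ℝ) else -1)
          = (fun i => signFun ((∑ p, x.1 i p * β p) + x.2 i)) := by
        funext i
        simp [signFun]
      refine ⟨fun i => decide (0 ≤ (∑ p, x.1 i p * β p) + x.2 i), ?_⟩
      show est (x.1, fun i => if decide (0 ≤ (∑ p, x.1 i p * β p) + x.2 i) = true
          then (1 : ℝ) else -1) = β
      rw [heqfun]
      exact hβ
    have hrange : Set.range g2 = ↑(Finset.univ.image g2) := by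
      rw [Finset.coe_image, Finset.coe_univ, Set.image_univ]
    have hcount2 : Measure.count (Set.range g2) ≤ (2 : ℝ≥0∞) ^ n := by
      rw [hrange, Measure.count_apply_finset]
      have : (Finset.univ.image g2).card ≤ 2 ^ n := by
        refine le_trans (Finset.card_image_le) ?_
        rw [Finset.card_univ]
        simp [Fintype.card_fun]
      exact_mod_cast this
    have hcountF : Measure.count (F3block J N K ε) = (c : ℝ≥0∞) := by
      rw [hFeq, Measure.count_apply_finset, hcard]
    rw [hμβ, uniformOn, cond_apply hFfin.measurableSet, hcountF]
    calc ((c : ℝ≥0∞))⁻¹ * Measure.count (F3block J N K ε ∩ {β | (β, x) ∈ C})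
        ≤ ((2 : ℝ≥0∞) ^ (n + 1))⁻¹ * (2 : ℝ≥0∞) ^ n := by
          apply mul_le_mul'
          · apply ENNReal.inv_le_inv'
            have : ((2 : ℕ) ^ (n + 1) : ℝ≥0∞) ≤ (c : ℝ≥0∞) := by exact_mod_cast hnum
            simpa using this
          · exact le_trans (measure_mono (Set.inter_subset_right.trans hsub)) hcount2
      _ = 1 / 2 := by
          rw [pow_succ, ENNReal.mul_inv (Or.inl (by positivity)) (Or.inl (by norm_num)),
            mul_comm ((2 : ℝ≥0∞) ^ n)⁻¹ _, mul_assoc,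
            ENNReal.inv_mul_cancel (by positivity) (by simp), mul_one, one_div]
  -- the probability of correct estimation is at most 1/2
  have hle : (μβ.prod ν) C ≤ 1 / 2 := by
    rw [← Measure.prod_swap, Measure.map_apply measurable_swap hC,
      Measure.prod_apply (hC.preimage measurable_swap)]
    calc ∫⁻ x, μβ (Prod.mk x ⁻¹' (Prod.swap ⁻¹' C)) ∂ν
        ≤ ∫⁻ _, 1 / 2 ∂ν := by
          apply lintegral_mono
          intro x
          exact hpoint x
      _ = 1 / 2 := by rw [lintegral_const, measure_univ, mul_one]
  -- conclude
  have hval : (μβ.prod ν) {ω : (Fin J × Fin N → ℝ) ×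
      ((Fin n → Fin J × Fin N → ℝ) × (Fin n → ℝ)) |
      est (ω.2.1, fun i => signFun ((∑ p, ω.2.1 i p * ω.1 p) + ω.2.2 i)) ≠ ω.1}
      = 1 - (μβ.prod ν) C := by
    have : {ω : (Fin J × Fin N → ℝ) ×
        ((Fin n → Fin J × Fin N → ℝ) × (Fin n → ℝ)) |
        est (ω.2.1, fun i => signFun ((∑ p, ω.2.1 i p * ω.1 p) + ω.2.2 i)) ≠ ω.1} = Cᶜ := rfl
    rw [this, measure_compl hC (measure_ne_top _ _), measure_univ]
  rw [hval]
  calc (1 / 2 : ℝ≥0∞) = 1 - 1 / 2 := (ENNReal.sub_half ENNReal.one_ne_top).symm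
    _ ≤ 1 - (μβ.prod ν) C := tsub_le_tsub_left hle 1
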